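/- Let τ ∈ ℝ^{2g} satisfy τ_i = α^{-2} τ_{i+1} for i ∈ {1,…,2g-2}\{g}, τ_{2g-1} = α^{-1} τ_g, and τ_g + τ_{2g} = α^{-1} τ_{2g}, with α > 1 and τ_{2g} < 0, τ_i > 0 for i < 2g. Then the total sum s = Σ_{i=1}^{2g} τ_i equals α^{-(2g-1)} τ_{2g}, and in particular s < 0. -/

import Mathlib

theorem stmt_17 (g : ℕ) (hg : 2 ≤ g) (α : ℝ) (hα : 1 < α)
    (τ : ℕ → ℝ)
    (h1 : ∀ i, 1 ≤ i → i ≤ 2 * g - 2 → i ≠ g → τ i = α⁻¹ ^ 2 * τ (i + 1))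
    (h2 : τ (2 * g - 1) = α⁻¹ * τ g)
    (h3 : τ g + τ (2 * g) = α⁻¹ * τ (2 * g))
    (hneg : τ (2 * g) < 0)
    (hpos : ∀ i, 1 ≤ i → i < 2 * g → 0 < τ i) :
    (∑ i ∈ Finset.Icc 1 (2 * g), τ i) = τ (2 * g) / α ^ (2 * g - 1) ∧
      (∑ i ∈ Finset.Icc 1 (2 * g), τ i) < 0 := by
  obtain ⟨m, rfl⟩ : ∃ m, g = m + 2 := ⟨g - 2, by omega⟩
  have hα0 : (0:ℝ) < α := lt_trans one_pos hα
  have hαne : α ≠ 0 := hα0.ne'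
  have hβ0 : (0:ℝ) < α⁻¹ := inv_pos.mpr hα0
  have hβ1 : α⁻¹ < 1 := by
    rw [inv_lt_one_iff₀]; right; exact hα
  have hβsq : (α⁻¹ ^ 2 : ℝ) ≠ 1 := by nlinarith
  -- closed form, first block
  have A : ∀ k, k ≤ m + 1 → τ (m + 2 - k) = α⁻¹ ^ (2 * k) * τ (m + 2) := by
    intro k
    induction k with
    | zero => intro _; simp
    | succ n ih =>
      intro hk
      have hrec := h1 (m + 2 - (n + 1)) (by omega) (by omega) (by omega)
      rw [show m + 2 - (n + 1) + 1 = m + 2 - n by omega] at hrec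
      rw [hrec, ih (by omega)]
      ring
  -- closed form, second block
  have B : ∀ k, k ≤ m → τ (2 * (m + 2) - 1 - k) = α⁻¹ ^ (2 * k) * τ (2 * (m + 2) - 1) := by
    intro k
    induction k with
    | zero => intro _; simp
    | succ n ih =>
      intro hk
      have hrec := h1 (2 * (m + 2) - 1 - (n + 1)) (by omega) (by omega) (by omega)
      rw [show 2 * (m + 2) - 1 - (n + 1) + 1 = 2 * (m + 2) - 1 - n by omega] at hrec
      rw [hrec, ih (by omega)]
      ring
  -- first block sum
  have S1 : ∑ i ∈ Finset.Icc 1 (m + 2), τ i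
      = (∑ k ∈ Finset.range (m + 2), (α⁻¹ ^ 2) ^ k) * τ (m + 2) := by
    rw [Finset.sum_mul]
    refine Finset.sum_nbij' (fun i => m + 2 - i) (fun k => m + 2 - k) ?_ ?_ ?_ ?_ ?_
    · intro a ha; simp only [Finset.mem_Icc] at ha; simp only [Finset.mem_range]; omega
    · intro a ha; simp only [Finset.mem_range] at ha; simp only [Finset.mem_Icc]; omega
    · intro a ha; simp only [Finset.mem_Icc] at ha; omega
    · intro a ha; simp only [Finset.mem_range] at ha; omega
    · intro a ha
      simp only [Finset.mem_Icc] at ha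
      have := A (m + 2 - a) (by omega)
      rw [show m + 2 - (m + 2 - a) = a by omega] at this
      rw [this, ← pow_mul]
  -- second block sum
  have S2 : ∑ i ∈ Finset.Ioc (m + 2) (2 * (m + 2) - 1), τ i
      = (∑ k ∈ Finset.range (m + 1), (α⁻¹ ^ 2) ^ k) * τ (2 * (m + 2) - 1) := by
    rw [Finset.sum_mul]
    refine Finset.sum_nbij' (fun i => 2 * (m + 2) - 1 - i) (fun k => 2 * (m + 2) - 1 - k) ?_ ?_ ?_ ?_ ?_
    · intro a ha; simp only [Finset.mem_Ioc] at ha; simp only [Finset.mem_range]; omega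
    · intro a ha; simp only [Finset.mem_range] at ha; simp only [Finset.mem_Ioc]; omega
    · intro a ha; simp only [Finset.mem_Ioc] at ha; omega
    · intro a ha; simp only [Finset.mem_range] at ha; omega
    · intro a ha
      simp only [Finset.mem_Ioc] at ha
      have := B (2 * (m + 2) - 1 - a) (by omega)
      rw [show 2 * (m + 2) - 1 - (2 * (m + 2) - 1 - a) = a by omega] at this
      rw [this, ← pow_mul]
  -- split the full sum
  have hsplit : Finset.Icc 1 (2 * (m + 2))
      = (Finset.Icc 1 (m + 2) ∪ Finset.Ioc (m + 2) (2 * (m + 2) - 1)) ∪ {2 * (m + 2)} := by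
    ext i
    simp only [Finset.mem_Icc, Finset.mem_union, Finset.mem_Ioc, Finset.mem_singleton]
    omega
  have hd1 : Disjoint (Finset.Icc 1 (m + 2)) (Finset.Ioc (m + 2) (2 * (m + 2) - 1)) := by
    rw [Finset.disjoint_left]
    intro a ha hb
    simp only [Finset.mem_Icc] at ha
    simp only [Finset.mem_Ioc] at hb
    omega
  have hd2 : Disjoint (Finset.Icc 1 (m + 2) ∪ Finset.Ioc (m + 2) (2 * (m + 2) - 1))
      ({2 * (m + 2)} : Finset ℕ) := by
    rw [Finset.disjoint_right]
    intro a ha hb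
    simp only [Finset.mem_singleton] at ha
    simp only [Finset.mem_union, Finset.mem_Icc, Finset.mem_Ioc] at hb
    omega
  have hsum : ∑ i ∈ Finset.Icc 1 (2 * (m + 2)), τ i
      = (∑ i ∈ Finset.Icc 1 (m + 2), τ i)
        + (∑ i ∈ Finset.Ioc (m + 2) (2 * (m + 2) - 1), τ i) + τ (2 * (m + 2)) := by
    rw [hsplit, Finset.sum_union hd2, Finset.sum_union hd1, Finset.sum_singleton]
  have hgτ : τ (m + 2) = α⁻¹ * τ (2 * (m + 2)) - τ (2 * (m + 2)) := by linarith
  have key : ∑ i ∈ Finset.Icc 1 (2 * (m + 2)), τ i = τ (2 * (m + 2)) / α ^ (2 * (m + 2) - 1) := by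
    rw [hsum, S1, S2, geom_sum_eq hβsq, geom_sum_eq hβsq, h2, hgτ,
      show 2 * (m + 2) - 1 = 2 * m + 3 by omega]
    have h2m : (α⁻¹ ^ 2 : ℝ) - 1 ≠ 0 := sub_ne_zero.mpr hβsq
    have hα1 : (α ^ 2 : ℝ) - 1 ≠ 0 := by nlinarith
    have hα1' : (1 : ℝ) - α ^ 2 ≠ 0 := by nlinarith
    rw [show (α⁻¹ ^ 2 : ℝ) - 1 = (1 - α ^ 2) / α ^ 2 by field_simp]
    field_simp
    simp only [one_div, inv_pow, ← pow_mul]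
    field_simp
    ring
  exact ⟨key, by rw [key]; exact div_neg_of_neg_of_pos hneg (pow_pos hα0 _)⟩
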